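/- Let n ≥ 7 be a natural number, let n_co be a natural number with 1 ≤ n_co and 2·n_co ≤ n, set n_p = n − n_co, and let λ be a real number with 0 < λ < 1/(n−1). Assume 1 − λ·Z − λ²·Y > 0 and 1 − λ·(n_co − 1) − λ²·n_p·n_co > 0. Then the incomplete-information core action strictly exceeds the complete-information core action: (1 + λ·X)/(1 − λ·Z − λ²·Y) > (1 + λ·n_p)/(1 − λ·(n_co − 1) − λ²·n_p·n_co). -/

import Mathlib

lemma sum_Icc_shift {M : Type*} [AddCommMonoid M] (f : ℕ → M) (a N : ℕ) :
    ∑ k ∈ Finset.Icc a N, f k = ∑ j ∈ Finset.range (N + 1 - a), f (a + j) := by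
  rw [← Finset.Ico_add_one_right_eq_Icc, Finset.sum_Ico_eq_sum_range]

lemma lem1 (N : ℕ) : (∑ k ∈ Finset.Icc 1 N, N.choose (k-1)) + 1 = 2^N := by
  rw [sum_Icc_shift]
  simp only [Nat.add_sub_cancel_left, Nat.add_sub_cancel]
  have h := Nat.sum_range_choose N
  rw [Finset.sum_range_succ] at h
  simpa using h

lemma lem2a (N : ℕ) : 2 * ∑ i ∈ Finset.range (N+1), i * N.choose i = N * 2^N := by
  have hr := Finset.sum_range_reflect (fun i => i * N.choose i) (N+1)
  have hsym : ∀ j ∈ Finset.range (N+1), (N + 1 - 1 - j) * N.choose (N + 1 - 1 - j)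
      = (N - j) * N.choose j := by
    intro j hj
    have := Finset.mem_range.mp hj
    simp only [Nat.add_sub_cancel]
    rw [Nat.choose_symm (by omega : j ≤ N)]
  rw [Finset.sum_congr rfl hsym] at hr
  have hadd : ∑ i ∈ Finset.range (N+1), ((N - i) * N.choose i + i * N.choose i)
      = ∑ i ∈ Finset.range (N+1), N * N.choose i := by
    refine Finset.sum_congr rfl fun i hi => ?_
    have : N - i + i = N := by
      have := Finset.mem_range.mp hi; omega
    rw [← add_mul, this]
  rw [Finset.sum_add_distrib, hr] at hadd
  rw [← Finset.mul_sum, Nat.sum_range_choose] at hadd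
  omega

lemma lem2 (N : ℕ) : 2 * (∑ k ∈ Finset.Icc 1 N, k * N.choose (k-1)) + 2 * (N + 1)
    = (N + 2) * 2^N := by
  rw [sum_Icc_shift]
  simp only [Nat.add_sub_cancel_left, Nat.add_sub_cancel]
  have h1 : ∑ j ∈ Finset.range N, (1 + j) * N.choose j
      = (∑ j ∈ Finset.range (N+1), (j+1) * N.choose j) - (N+1) := by
    rw [Finset.sum_range_succ, Nat.choose_self]
    simp [add_comm]
  rw [h1]
  have h2 : ∑ j ∈ Finset.range (N+1), (j+1) * N.choose j
      = (∑ j ∈ Finset.range (N+1), j * N.choose j) + 2^N := by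
    rw [← Nat.sum_range_choose N, ← Finset.sum_add_distrib]
    exact Finset.sum_congr rfl fun i _ => by ring
  have h3 := lem2a N
  have h5 : (N+2) * 2^N = N * 2^N + 2 * 2^N := by ring
  have h4 : (N+1) ≤ ∑ j ∈ Finset.range (N+1), (j+1) * N.choose j := by
    rw [h2]; have := Nat.lt_two_pow_self (n := N); omega
  omega

lemma lem3 (n : ℕ) (hn : 2 ≤ n) : ∑ k ∈ Finset.Icc 2 n, (n-2).choose (k-2) = 2^(n-2) := by
  rw [sum_Icc_shift]
  simp only [Nat.add_sub_cancel_left]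
  have : n + 1 - 2 = (n - 2) + 1 := by omega
  rw [this]
  exact Nat.sum_range_choose (n-2)

lemma lem4 (n : ℕ) (hn : 7 ≤ n) : n^2 ≤ 2^(n-1) := by
  induction n with
  | zero => omega
  | succ k ih =>
    rcases Nat.lt_or_ge k 7 with h | h
    · interval_cases k <;> simp_all
    · have hk := ih (by omega)
      have h1 : k + 1 - 1 = (k - 1) + 1 := by omega
      rw [h1, pow_succ 2 (k-1)]
      nlinarith [hk, Nat.mul_le_mul_right k h]

set_option maxHeartbeats 1000000 in
/-- Lemma 1: For `n ≥ 7`, `1 ≤ n_co` with `2 n_co ≤ n`, `n_p = n - n_co`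
and `0 < λ < 1/(n-1)`, with both denominators positive, the incomplete-information
core action strictly exceeds the complete-information core action:
`(1 + λX)/(1 - λZ - λ²Y) > (1 + λ n_p)/(1 - λ(n_co - 1) - λ² n_p n_co)`. -/
theorem stmt_10 (n n_co : ℕ) (hn : 7 ≤ n) (hc1 : 1 ≤ n_co) (hc2 : 2 * n_co ≤ n)
    (n_p : ℕ) (hnp : n_p = n - n_co)
    (lam : ℝ) (hlam0 : 0 < lam) (hlam1 : lam < 1 / ((n : ℝ) - 1))
    (Δ X Y Z : ℝ)
    (hΔ : Δ = 2 ^ (n - 1) - ((n : ℝ) - 1))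
    (hX : X = ((n : ℝ) - 1) * (∑ k ∈ Finset.Icc 1 (n - 2), ((n - 2).choose (k - 1) : ℝ)) / Δ)
    (hY : Y = ((n : ℝ) - 1) * (∑ k ∈ Finset.Icc 1 (n - 2), (k : ℝ) * ((n - 2).choose (k - 1) : ℝ)) / Δ)
    (hZ : Z = ((n : ℝ) - 1) *
      ((∑ k ∈ Finset.Icc 2 n, ((n - 2).choose (k - 2) : ℝ)) - ((n - 2).choose (n - 3) : ℝ)) / Δ)
    (hden1 : 0 < 1 - lam * Z - lam ^ 2 * Y)
    (hden2 : 0 < 1 - lam * ((n_co : ℝ) - 1) - lam ^ 2 * (n_p : ℝ) * (n_co : ℝ)) :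
    (1 + lam * X) / (1 - lam * Z - lam ^ 2 * Y) >
      (1 + lam * (n_p : ℝ)) / (1 - lam * ((n_co : ℝ) - 1) - lam ^ 2 * (n_p : ℝ) * (n_co : ℝ)) := by
  set en : ℝ := (n : ℝ) with hen
  set p : ℝ := (n_p : ℝ) with hpdef
  set c : ℝ := (n_co : ℝ) with hcdef
  have hn7 : (7:ℝ) ≤ en := by rw [hen]; exact_mod_cast hn
  have hco_le : n_co ≤ n := by omega
  have hpc : p = en - c := by
    rw [hpdef, hcdef, hen, hnp, Nat.cast_sub hco_le]
  have hc1' : (1:ℝ) ≤ c := by rw [hcdef]; exact_mod_cast hc1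
  have hc2' : 2 * c ≤ en := by rw [hcdef, hen]; exact_mod_cast hc2
  have h2p : en ≤ 2 * p := by rw [hpc]; linarith
  have hple : p ≤ en - 1 := by rw [hpc]; linarith
  set m : ℝ := (2:ℝ)^(n-3) with hm
  have hpow1 : (2:ℝ)^(n-1) = 4 * m := by
    rw [hm, show n - 1 = (n-3) + 2 by omega, pow_add]; ring
  have hpow2 : (2:ℝ)^(n-2) = 2 * m := by
    rw [hm, show n - 2 = (n-3) + 1 by omega, pow_add]; ring
  have hm4 : en^2 ≤ 4 * m := by
    have := lem4 n hn
    have h' : ((n:ℕ)^2 : ℝ) ≤ ((2^(n-1) : ℕ) : ℝ) := by exact_mod_cast this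
    push_cast at h'
    rw [hpow1] at h'
    rw [hen]; exact_mod_cast h'
  have hmpos : 0 < m := by positivity
  have hΔpos : 0 < Δ := by rw [hΔ, hpow1]; nlinarith
  have hΔv : Δ = 4 * m - (en - 1) := by rw [hΔ, hpow1, hen]
  -- sums
  have hS1 : (∑ k ∈ Finset.Icc 1 (n - 2), ((n - 2).choose (k - 1) : ℝ)) = 2 * m - 1 := by
    have := lem1 (n-2)
    have h' : ((∑ k ∈ Finset.Icc 1 (n-2), (n-2).choose (k-1) : ℕ) : ℝ) + 1
        = ((2^(n-2) : ℕ) : ℝ) := by exact_mod_cast congrArg (Nat.cast (R := ℝ)) this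
    push_cast at h'
    rw [hpow2] at h'
    linarith
  have hS2 : (∑ k ∈ Finset.Icc 1 (n - 2), (k : ℝ) * ((n - 2).choose (k - 1) : ℝ))
      = en * m - (en - 1) := by
    have := lem2 (n-2)
    have h' : 2 * ((∑ k ∈ Finset.Icc 1 (n-2), k * (n-2).choose (k-1) : ℕ) : ℝ)
        + 2 * (((n-2 : ℕ) : ℝ) + 1) = (((n-2:ℕ):ℝ) + 2) * (2:ℝ)^(n-2) := by
      exact_mod_cast congrArg (Nat.cast (R := ℝ)) this
    have hcast : ((n-2 : ℕ) : ℝ) = en - 2 := by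
      rw [Nat.cast_sub (by omega : 2 ≤ n)]; norm_num [hen]
    rw [hcast, hpow2] at h'
    push_cast at h'
    linarith
  have hS3 : (∑ k ∈ Finset.Icc 2 n, ((n - 2).choose (k - 2) : ℝ)) = 2 * m := by
    have := lem3 n (by omega)
    have h' : ((∑ k ∈ Finset.Icc 2 n, (n-2).choose (k-2) : ℕ) : ℝ) = ((2^(n-2) : ℕ):ℝ) := by
      exact_mod_cast congrArg (Nat.cast (R := ℝ)) this
    push_cast at h'
    rw [hpow2] at h'
    exact_mod_cast h'
  have hch : (((n-2).choose (n-3)) : ℝ) = en - 2 := by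
    have h1 : (n-2).choose (n-3) = n - 2 := by
      rw [show n - 3 = (n-2) - 1 by omega, Nat.choose_symm (by omega : 1 ≤ n - 2),
        Nat.choose_one_right]
    rw [h1, Nat.cast_sub (by omega : 2 ≤ n)]; norm_num [hen]
  have hXv : X = (en - 1) * (2*m - 1) / Δ := by rw [hX, hS1, hen]
  have hYv : Y = (en - 1) * (en*m - (en - 1)) / Δ := by rw [hY, hS2, hen]
  have hZv : Z = (en - 1) * (2*m - (en - 2)) / Δ := by
    rw [hZ, hS3, hch]
  -- basic lambda facts
  have hen1 : (0:ℝ) < en - 1 := by linarith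
  have hlam1' : lam * (en - 1) < 1 := by
    rw [lt_div_iff₀ hen1] at hlam1; linarith
  -- key inequalities
  have hu : (0:ℝ) ≤ 2*p - en := by linarith
  have hBpos : (0:ℝ) < 4*p*(p-1) - (en-1)*(en-2) := by
    have idB : 4*p*(p-1)-(en-1)*(en-2) = (2*p-en)*(2*en+(2*p-en)-2) + (en-2) := by ring
    have t := mul_nonneg hu (show (0:ℝ) ≤ 2*en+(2*p-en)-2 by linarith)
    rw [idB]; linarith
  have hApos : (0:ℝ) < 6*p^2 - (en+4)*p - (en-1)*(en-2) := by
    have idA : 6*p^2-(en+4)*p-(en-1)*(en-2)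
        = ((2*p-en)*(5*en+3*(2*p-en)-4))/2 + (en-2) := by ring
    have t := mul_nonneg hu (show (0:ℝ) ≤ 5*en+3*(2*p-en)-4 by linarith)
    rw [idA]; linarith
  have hq1 : (0:ℝ) < en^2*(4*p*(p-1)-(en-1)*(en-2)) - 4*(en-1)*p*(p-1) := by
    have id1 : en^2*(4*p*(p-1)-(en-1)*(en-2)) - 4*(en-1)*p*(p-1)
        = en^2 - 2*en + (2*p-en)*(2*en^3-4*en^2+4*en-2)
          + (2*p-en)^2*(en^2-en+1) := by ring
    rw [id1]
    have c1 : (0:ℝ) ≤ 2*en^3-4*en^2+4*en-2 := by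
      nlinarith [mul_nonneg (mul_nonneg (by linarith : (0:ℝ) ≤ en)
        (by linarith : (0:ℝ) ≤ en)) (by linarith : (0:ℝ) ≤ en - 2)]
    have t1 : (0:ℝ) ≤ (2*p-en)*(2*en^3-4*en^2+4*en-2) := mul_nonneg hu c1
    have t2 : (0:ℝ) ≤ (2*p-en)^2*(en^2-en+1) :=
      mul_nonneg (sq_nonneg _) (by nlinarith [sq_nonneg (en-1)])
    have t0 : (0:ℝ) < en*(en-2) := mul_pos (by linarith) (by linarith)
    have e0 : en^2 - 2*en = en*(en-2) := by ring
    linarith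
  have hq2 : (0:ℝ) ≤ en^2*(6*p^2-(en+4)*p-(en-1)*(en-2)) - 4*en*p*(p-1) := by
    have id2 : en^2*(6*p^2-(en+4)*p-(en-1)*(en-2)) - 4*en*p*(p-1)
        = (en*(2*p-en)/2)*(5*en^2+3*en*(2*p-en)-8*en-2*(2*p-en)+4) := by ring
    rw [id2]
    apply mul_nonneg
    · apply div_nonneg (mul_nonneg (by linarith) hu) (by norm_num)
    · linarith [mul_nonneg hu (show (0:ℝ) ≤ 3*en - 2 by linarith),
        mul_nonneg (show (0:ℝ) ≤ en by linarith) (show (0:ℝ) ≤ 5*en - 8 by linarith)]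
  -- lift from en^2/4 to m
  have hBm : m*(4*p*(p-1) - (en-1)*(en-2)) > (en-1)*p*(p-1) := by
    have step : (en^2/4)*(4*p*(p-1)-(en-1)*(en-2)) ≤ m*(4*p*(p-1)-(en-1)*(en-2)) := by
      apply mul_le_mul_of_nonneg_right (by linarith) (le_of_lt hBpos)
    linarith
  have hAm : m*(6*p^2-(en+4)*p-(en-1)*(en-2)) ≥ en*p*(p-1) := by
    have step : (en^2/4)*(6*p^2-(en+4)*p-(en-1)*(en-2)) ≤ m*(6*p^2-(en+4)*p-(en-1)*(en-2)) := by
      apply mul_le_mul_of_nonneg_right (by linarith) (le_of_lt hApos)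
    linarith
  -- helper facts
  have hΔne : Δ ≠ 0 := ne_of_gt hΔpos
  have hΔv' : (4*m - (en-1)) ≠ 0 := by rw [← hΔv]; exact hΔne
  have hcp : c = en - p := by rw [hpc]; ring
  have hZX : Z = en - 1 - X := by
    rw [hXv, hZv, hΔv, eq_sub_iff_add_eq, ← add_div, div_eq_iff hΔv']; ring
  -- c2 positivity
  have e1 : Δ * (Y + p*(p-1) - X*(en-1))
      = m*(4*p*(p-1) - (en-1)*(en-2)) - (en-1)*p*(p-1) := by
    rw [hXv, hYv, hΔv]
    field_simp
    ring
  have hc2pos : 0 < Y + p*(p-1) - X*(en-1) := by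
    have ht : 0 < Δ * (Y + p*(p-1) - X*(en-1)) := by rw [e1]; linarith
    have := div_pos ht hΔpos
    rwa [mul_div_cancel_left₀ _ hΔne] at this
  -- key2
  have e2 : Δ * ((en-1)*(Y + p*(p-1) - X*(en-1)) + p*(Y - X*c))
      = (en-1)*(m*(6*p^2-(en+4)*p-(en-1)*(en-2)) - en*p*(p-1)) := by
    rw [hcp, hXv, hYv, hΔv]
    field_simp
    ring
  have hkey2 : 0 ≤ (en-1)*(Y + p*(p-1) - X*(en-1)) + p*(Y - X*c) := by
    have ht : 0 ≤ Δ * ((en-1)*(Y + p*(p-1) - X*(en-1)) + p*(Y - X*c)) := by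
      rw [e2]
      apply mul_nonneg (by linarith)
      linarith
    have := div_nonneg ht hΔpos.le
    rwa [mul_div_cancel_left₀ _ hΔne] at this
  -- combined key
  have hkey : 0 < (Y + p*(p-1) - X*(en-1)) + lam * (p*(Y - X*c)) := by
    have idk : (Y + p*(p-1) - X*(en-1)) + lam * (p*(Y - X*c))
        = (Y + p*(p-1) - X*(en-1))*(1 - lam*(en-1))
          + lam*((en-1)*(Y + p*(p-1) - X*(en-1)) + p*(Y - X*c)) := by ring
    rw [idk]
    have t1 : 0 < (Y + p*(p-1) - X*(en-1))*(1 - lam*(en-1)) :=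
      mul_pos hc2pos (by linarith)
    have t2 : 0 ≤ lam*((en-1)*(Y + p*(p-1) - X*(en-1)) + p*(Y - X*c)) :=
      mul_nonneg hlam0.le hkey2
    linarith
  -- difference identity
  have hdiff : (1 + lam*X)*(1 - lam*(c-1) - lam^2*p*c) - (1 + lam*p)*(1 - lam*Z - lam^2*Y)
      = lam^2*((Y + p*(p-1) - X*(en-1)) + lam * (p*(Y - X*c))) := by
    rw [hZX, hcp]; ring
  have hpos : 0 < lam^2*((Y + p*(p-1) - X*(en-1)) + lam * (p*(Y - X*c))) :=
    mul_pos (pow_pos hlam0 2) hkey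
  rw [gt_iff_lt, div_lt_div_iff₀ hden2 hden1]
  linarith [hdiff, hpos]
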